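/- Let E denote the inner product space of functions Fin 11 → ℝ³, let T > 0, κ > 0, let Υ : E → E be a linear map, let p : Fin 11 → ℝ³ have heights a i := ⟨p i, e₃⟩ ≥ 0, let F : [0,T] → E be integrable, and let U₀, U₁ ∈ E. Then there exists a unique continuous function U : [0,T] → E satisfying, for every t ∈ [0,T], the integral equation U(t) = U₀ + t • U₁ + ∫₀ᵗ (t − s) • (F(s) − Υ(U(s)) − κ⁻¹ N_pt(U(s))) ds. -/

import Mathlib

open MeasureTheory intervalIntegral
open scoped RealInnerProductSpace BigOperators

/-- The third standard basis vector `e₃ = (0,0,1)` of `ℝ³`. -/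
noncomputable def e3 : EuclideanSpace ℝ (Fin 3) := EuclideanSpace.single 2 1

/-- The finite-dimensional inner product space `E` of displacement arrays
`Fin 11 → ℝ³`, endowed with the Euclidean (ℓ²) inner product. -/
abbrev E : Type := PiLp 2 (fun _ : Fin 11 => EuclideanSpace ℝ (Fin 3))

/-- The pointwise penalty map: `(N_pt u) i = −((a i + ⟨u i, e₃⟩)⁻) • e₃`,
where `a i = ⟨p i, e₃⟩` and `x⁻ = max (−x) 0`. -/
noncomputable def Npt (p : Fin 11 → EuclideanSpace ℝ (Fin 3)) (u : E) : E :=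
  WithLp.toLp 2 (fun i => (-(max (-(⟪p i, e3⟫ + ⟪u i, e3⟫)) 0)) • e3)

lemma norm_e3 : ‖e3‖ = 1 := by
  simp [e3, EuclideanSpace.norm_single]

lemma npt_comp_le (p : Fin 11 → EuclideanSpace ℝ (Fin 3)) (u v : E) (i : Fin 11) :
    ‖Npt p u i - Npt p v i‖ ≤ ‖u i - v i‖ := by
  have h1 : Npt p u i - Npt p v i =
      ((-(max (-(⟪p i, e3⟫ + ⟪u i, e3⟫)) 0)) - (-(max (-(⟪p i, e3⟫ + ⟪v i, e3⟫)) 0))) • e3 := by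
    rw [sub_smul]; rfl
  rw [h1, norm_smul, norm_e3, mul_one, Real.norm_eq_abs]
  have h2 : |(-(max (-(⟪p i, e3⟫ + ⟪u i, e3⟫)) 0)) - (-(max (-(⟪p i, e3⟫ + ⟪v i, e3⟫)) 0))|
      ≤ |(-(⟪p i, e3⟫ + ⟪v i, e3⟫)) - (-(⟪p i, e3⟫ + ⟪u i, e3⟫))| := by
    rw [neg_sub_neg]
    exact abs_max_sub_max_le_abs _ _ _
  refine h2.trans ?_
  have h3 : (-(⟪p i, e3⟫ + ⟪v i, e3⟫)) - (-(⟪p i, e3⟫ + ⟪u i, e3⟫)) = ⟪u i - v i, e3⟫ := by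
    rw [inner_sub_left]; ring
  rw [h3]
  calc |⟪u i - v i, e3⟫| ≤ ‖u i - v i‖ * ‖e3‖ := abs_real_inner_le_norm _ _
    _ = ‖u i - v i‖ := by rw [norm_e3, mul_one]

lemma npt_lip (p : Fin 11 → EuclideanSpace ℝ (Fin 3)) (u v : E) :
    ‖Npt p u - Npt p v‖ ≤ ‖u - v‖ := by
  rw [PiLp.norm_eq_of_L2, PiLp.norm_eq_of_L2]
  apply Real.sqrt_le_sqrt
  apply Finset.sum_le_sum
  intro i _
  have h : ‖(Npt p u - Npt p v) i‖ ≤ ‖(u - v) i‖ := npt_comp_le p u v i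
  exact pow_le_pow_left₀ (norm_nonneg _) h 2

lemma intervalIntegrable_smul_continuousOn {f : ℝ → E} {g : ℝ → ℝ} {a b : ℝ}
    (hf : IntervalIntegrable f volume a b) (hg : ContinuousOn g (Set.uIcc a b)) :
    IntervalIntegrable (fun x => g x • f x) volume a b := by
  obtain ⟨C, hC⟩ := isCompact_uIcc.exists_bound_of_continuousOn hg
  rw [intervalIntegrable_iff] at hf ⊢
  exact MeasureTheory.Integrable.smul_of_top_right hf <|
    memLp_top_of_bound
      ((hg.aestronglyMeasurable measurableSet_uIcc).mono_measure
        (Measure.restrict_mono Set.uIoc_subset_uIcc le_rfl)) C <| by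
      filter_upwards [ae_restrict_mem measurableSet_uIoc] with x hx
        using hC x (Set.uIoc_subset_uIcc hx)

/-- existence and uniqueness of a continuous solution on `[0,T]`
of the Duhamel integral formulation of the penalized problem
`U'' + Υ U + κ⁻¹ N_pt(U) = F`, `U(0) = U₀`, `U'(0) = U₁`:
`U(t) = U₀ + t • U₁ + ∫₀ᵗ (t − s) • (F(s) − Υ(U(s)) − κ⁻¹ N_pt(U(s))) ds`. -/
theorem penalized_problem_existence_uniqueness (T : ℝ) (hT : 0 < T)
    (κ : ℝ) (hκ : 0 < κ)
    (Υ : E →ₗ[ℝ] E)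
    (p : Fin 11 → EuclideanSpace ℝ (Fin 3)) (hp : ∀ i, 0 ≤ ⟪p i, e3⟫)
    (F : ℝ → E) (hF : IntegrableOn F (Set.Icc 0 T))
    (U₀ U₁ : E) :
    ∃ U : ℝ → E, ContinuousOn U (Set.Icc 0 T) ∧
      (∀ t ∈ Set.Icc (0 : ℝ) T,
        U t = U₀ + t • U₁ +
          ∫ s in (0 : ℝ)..t, (t - s) • (F s - Υ (U s) - κ⁻¹ • Npt p (U s))) ∧
      ∀ V : ℝ → E, ContinuousOn V (Set.Icc 0 T) →
        (∀ t ∈ Set.Icc (0 : ℝ) T,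
          V t = U₀ + t • U₁ +
            ∫ s in (0 : ℝ)..t, (t - s) • (F s - Υ (V s) - κ⁻¹ • Npt p (V s))) →
        Set.EqOn U V (Set.Icc 0 T) := by
  classical
  haveI : ContinuousSMul ℝ E := inferInstance
  have hΥc : Continuous Υ := Υ.continuous_of_finiteDimensional
  set G : E → E := fun u => Υ u + κ⁻¹ • Npt p u with hGdef
  have hNlip : LipschitzWith 1 (Npt p) := by
    apply LipschitzWith.of_dist_le_mul
    intro u v
    rw [NNReal.coe_one, one_mul, dist_eq_norm, dist_eq_norm]
    exact npt_lip p u v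
  have hGcont : Continuous G := hΥc.add (hNlip.continuous.const_smul κ⁻¹)
  obtain ⟨L, hL0, hGlip⟩ : ∃ L : ℝ, 0 ≤ L ∧ ∀ u v : E, ‖G u - G v‖ ≤ L * ‖u - v‖ := by
    refine ⟨‖LinearMap.toContinuousLinearMap Υ‖ + κ⁻¹, by positivity, fun u v => ?_⟩
    have h1 : G u - G v = Υ (u - v) + κ⁻¹ • (Npt p u - Npt p v) := by
      simp only [hGdef, map_sub, smul_sub]
      abel
    calc ‖G u - G v‖ ≤ ‖Υ (u - v)‖ + ‖κ⁻¹ • (Npt p u - Npt p v)‖ := by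
          rw [h1]; exact norm_add_le _ _
      _ ≤ ‖LinearMap.toContinuousLinearMap Υ‖ * ‖u - v‖ + κ⁻¹ * ‖u - v‖ := by
          apply add_le_add
          · exact (LinearMap.toContinuousLinearMap Υ).le_opNorm (u - v)
          · rw [norm_smul, Real.norm_eq_abs, abs_of_nonneg (by positivity)]
            exact mul_le_mul_of_nonneg_left (npt_lip p u v) (by positivity)
      _ = (‖LinearMap.toContinuousLinearMap Υ‖ + κ⁻¹) * ‖u - v‖ := by ring
  -- the function space
  set pr : ℝ → Set.Icc (0 : ℝ) T := Set.projIcc 0 T hT.le with hprdef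
  set h : C(Set.Icc (0:ℝ) T, E) → ℝ → E := fun u s => F s - G (u (pr s)) with hdef
  have hint : ∀ u : C(Set.Icc (0:ℝ) T, E), IntegrableOn (h u) (Set.Icc 0 T) := by
    intro u
    exact hF.sub ((hGcont.comp (u.continuous.comp continuous_projIcc)).integrableOn_Icc)
  have hii : ∀ (u : C(Set.Icc (0:ℝ) T, E)) {t : ℝ}, t ∈ Set.Icc (0 : ℝ) T →
      IntervalIntegrable (h u) volume 0 t := by
    intro u t ht
    apply IntegrableOn.intervalIntegrable
    rw [Set.uIcc_of_le ht.1]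
    exact (hint u).mono_set (Set.Icc_subset_Icc le_rfl ht.2)
  have hii2 : ∀ (u : C(Set.Icc (0:ℝ) T, E)) {t : ℝ}, t ∈ Set.Icc (0 : ℝ) T → ∀ r : ℝ,
      IntervalIntegrable (fun s => (r - s) • h u s) volume 0 t := by
    intro u t ht r
    exact intervalIntegrable_smul_continuousOn (hii u ht)
      (continuousOn_const.sub continuousOn_id)
  set Φfun : C(Set.Icc (0:ℝ) T, E) → ℝ → E := fun u t => U₀ + t • U₁ + ∫ s in (0:ℝ)..t, (t - s) • h u s
    with hΦfundef
  have hΦcont : ∀ u : C(Set.Icc (0:ℝ) T, E), ContinuousOn (Φfun u) (Set.Icc 0 T) := by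
    intro u
    have hint' : IntegrableOn (h u) (Set.uIcc 0 T) := by
      rw [Set.uIcc_of_le hT.le]; exact hint u
    have hint2' : IntegrableOn (fun s => s • h u s) (Set.uIcc 0 T) := by
      rw [Set.uIcc_of_le hT.le]
      rw [← Set.uIcc_of_le hT.le]
      have := intervalIntegrable_smul_continuousOn (hii u (Set.right_mem_Icc.2 hT.le))
        (continuousOn_id (s := Set.uIcc (0:ℝ) T))
      rw [Set.uIcc_of_le hT.le]
      exact (intervalIntegrable_iff_integrableOn_Icc_of_le hT.le).1 this
    have hprim1 : ContinuousOn (fun t => ∫ s in (0:ℝ)..t, h u s) (Set.Icc 0 T) := by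
      have := intervalIntegral.continuousOn_primitive_interval (a := (0:ℝ)) (b := T)
        (μ := volume) hint'
      rwa [Set.uIcc_of_le hT.le] at this
    have hprim2 : ContinuousOn (fun t => ∫ s in (0:ℝ)..t, s • h u s) (Set.Icc 0 T) := by
      have := intervalIntegral.continuousOn_primitive_interval (a := (0:ℝ)) (b := T)
        (μ := volume) hint2'
      rwa [Set.uIcc_of_le hT.le] at this
    have hcongr : ∀ t ∈ Set.Icc (0:ℝ) T, (fun t => U₀ + t • U₁ +
        ((t • ∫ s in (0:ℝ)..t, h u s) - ∫ s in (0:ℝ)..t, s • h u s)) t = Φfun u t := by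
      intro t ht
      simp only [hΦfundef]
      congr 1
      have h1 : ∫ s in (0:ℝ)..t, (t - s) • h u s
          = ∫ s in (0:ℝ)..t, (t • h u s - s • h u s) := by
        apply intervalIntegral.integral_congr
        intro s _
        exact sub_smul t s (h u s)
      have ia : IntervalIntegrable (fun s => t • h u s) volume 0 t := (hii u ht).smul t
      have ib : IntervalIntegrable (fun s => s • h u s) volume 0 t :=
        intervalIntegrable_smul_continuousOn (hii u ht) continuousOn_id
      rw [h1, intervalIntegral.integral_sub ia ib, intervalIntegral.integral_smul]
    refine ContinuousOn.congr ?_ fun t ht => (hcongr t ht).symm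
    exact (continuousOn_const.add (continuousOn_id.smul continuousOn_const)).add
      ((continuousOn_id.smul hprim1).sub hprim2)
  set Φ : C(Set.Icc (0:ℝ) T, E) → C(Set.Icc (0:ℝ) T, E) := fun u => ⟨(Set.Icc (0:ℝ) T).restrict (Φfun u), (hΦcont u).restrict⟩
    with hΦdef
  -- the key iterated estimate
  have key : ∀ n : ℕ, ∀ u v : C(Set.Icc (0:ℝ) T, E), ∀ x : Set.Icc (0:ℝ) T,
      ‖(Φ^[n] u) x - (Φ^[n] v) x‖
        ≤ (L * T) ^ n * (x : ℝ) ^ n / (n.factorial : ℝ) * dist u v := by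
    intro n
    induction n with
    | zero =>
      intro u v x
      simp only [Function.iterate_zero_apply, pow_zero, Nat.factorial_zero, Nat.cast_one,
        one_mul, div_one]
      rw [← dist_eq_norm]
      exact ContinuousMap.dist_apply_le_dist x
    | succ n ih =>
      intro u v x
      rw [Function.iterate_succ_apply', Function.iterate_succ_apply']
      set w : C(Set.Icc (0:ℝ) T, E) := Φ^[n] u with hw
      set w' : C(Set.Icc (0:ℝ) T, E) := Φ^[n] v with hw'
      obtain ⟨t, ht⟩ := x
      have hdiff : (Φ w) ⟨t, ht⟩ - (Φ w') ⟨t, ht⟩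
          = ∫ s in (0:ℝ)..t, (t - s) • (G (w' (pr s)) - G (w (pr s))) := by
        show Φfun w t - Φfun w' t = _
        simp only [hΦfundef]
        rw [add_sub_add_left_eq_sub,
          ← intervalIntegral.integral_sub (hii2 w ht t) (hii2 w' ht t)]
        apply intervalIntegral.integral_congr
        intro s _
        show (t - s) • h w s - (t - s) • h w' s = (t - s) • (G (w' (pr s)) - G (w (pr s)))
        rw [← smul_sub]
        congr 1
        simp only [hdef]
        abel
      rw [hdiff]
      have hbound : ‖∫ s in (0:ℝ)..t, (t - s) • (G (w' (pr s)) - G (w (pr s)))‖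
          ≤ |∫ s in (0:ℝ)..t, (T * L * ((L * T) ^ n / (n.factorial : ℝ) * dist u v)) * s ^ n| := by
        apply intervalIntegral.norm_integral_le_abs_of_norm_le
        · filter_upwards [ae_restrict_mem measurableSet_uIoc] with s hs
          rw [Set.uIoc_of_le ht.1] at hs
          have hsIcc : s ∈ Set.Icc (0:ℝ) T := ⟨hs.1.le, hs.2.trans ht.2⟩
          have hpr : pr s = ⟨s, hsIcc⟩ := by
            simp only [hprdef]
            exact Set.projIcc_of_mem hT.le hsIcc
          rw [norm_smul, Real.norm_eq_abs, hpr]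
          have h1 : |t - s| ≤ T := by
            rw [abs_of_nonneg (by linarith [hs.2])]
            linarith [hs.1, ht.2]
          have h2 : ‖G (w' ⟨s, hsIcc⟩) - G (w ⟨s, hsIcc⟩)‖
              ≤ L * ((L * T) ^ n * s ^ n / (n.factorial : ℝ) * dist u v) := by
            refine (hGlip _ _).trans ?_
            apply mul_le_mul_of_nonneg_left _ hL0
            rw [← norm_sub_rev]
            exact ih u v ⟨s, hsIcc⟩
          calc |t - s| * ‖G (w' ⟨s, hsIcc⟩) - G (w ⟨s, hsIcc⟩)‖
              ≤ T * (L * ((L * T) ^ n * s ^ n / (n.factorial : ℝ) * dist u v)) := by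
                apply mul_le_mul h1 h2 (norm_nonneg _) hT.le
            _ = (T * L * ((L * T) ^ n / (n.factorial : ℝ) * dist u v)) * s ^ n := by ring
        · exact (continuous_const.mul (continuous_pow n)).intervalIntegrable 0 t
      refine hbound.trans ?_
      rw [intervalIntegral.integral_const_mul, integral_pow]
      have hfac : ((n + 1 : ℕ).factorial : ℝ) = ((n:ℝ) + 1) * (n.factorial : ℝ) := by
        rw [Nat.factorial_succ]; push_cast; ring
      have hd : (0:ℝ) ≤ dist u v := dist_nonneg
      have habs : |T * L * ((L * T) ^ n / (n.factorial : ℝ) * dist u v) *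
          ((t ^ (n + 1) - 0 ^ (n + 1)) / ((n:ℝ) + 1))|
          = T * L * ((L * T) ^ n / (n.factorial : ℝ) * dist u v) * (t ^ (n + 1) / ((n:ℝ) + 1)) := by
        rw [zero_pow (Nat.succ_ne_zero n), sub_zero]
        apply abs_of_nonneg
        have ht0 : (0:ℝ) ≤ t := ht.1
        positivity
      rw [habs, hfac]
      apply le_of_eq
      have hn0 : (n.factorial : ℝ) ≠ 0 := Nat.cast_ne_zero.2 n.factorial_ne_zero
      have hn1 : ((n:ℝ) + 1) ≠ 0 := by positivity
      field_simp
      ring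
  -- choose n making the iterate a contraction
  obtain ⟨n, hn⟩ : ∃ n : ℕ, (L * T * T) ^ n / (n.factorial : ℝ) < 1 := by
    have hconv := FloorSemiring.tendsto_pow_div_factorial_atTop (K := ℝ) (L * T * T)
    exact (hconv.eventually_lt_const one_pos).exists
  set c : ℝ := (L * T) ^ n * T ^ n / (n.factorial : ℝ) with hcdef
  have hc1 : c < 1 := by
    have : c = (L * T * T) ^ n / (n.factorial : ℝ) := by
      rw [hcdef, mul_pow, mul_pow]; ring
    rw [this]; exact hn
  have hc0 : (0:ℝ) ≤ c := by positivity
  have hlip : LipschitzWith c.toNNReal (Φ^[n]) := by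
    apply LipschitzWith.of_dist_le_mul
    intro u v
    rw [Real.coe_toNNReal c hc0]
    refine (ContinuousMap.dist_le (by positivity)).2 ?_
    intro x
    rw [dist_eq_norm]
    refine (key n u v x).trans ?_
    rw [hcdef]
    have hxT : (x : ℝ) ^ n ≤ T ^ n := pow_le_pow_left₀ x.2.1 x.2.2 n
    have : (L * T) ^ n * (x : ℝ) ^ n / (n.factorial : ℝ)
        ≤ (L * T) ^ n * T ^ n / (n.factorial : ℝ) := by
      have hfac0 : (0:ℝ) < (n.factorial : ℝ) := by positivity
      exact (div_le_div_iff_of_pos_right hfac0).2 (mul_le_mul_of_nonneg_left hxT (by positivity))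
    exact mul_le_mul_of_nonneg_right this dist_nonneg
  have hcontr : ContractingWith c.toNNReal (Φ^[n]) := by
    refine ⟨?_, hlip⟩
    rw [← NNReal.coe_lt_coe, Real.coe_toNNReal c hc0, NNReal.coe_one]
    exact hc1
  haveI : Nonempty C(Set.Icc (0:ℝ) T, E) := ⟨ContinuousMap.const _ 0⟩
  set fp : C(Set.Icc (0:ℝ) T, E) := hcontr.fixedPoint (Φ^[n]) with hfpdef
  have hfp : Function.IsFixedPt Φ fp := hcontr.isFixedPt_fixedPoint_iterate
  refine ⟨fun s => fp (pr s), ?_, ?_, ?_⟩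
  · exact (fp.continuous.comp continuous_projIcc).continuousOn
  · intro t ht
    have hprt : pr t = ⟨t, ht⟩ := Set.projIcc_of_mem hT.le ht
    have h1 : fp (pr t) = Φ fp ⟨t, ht⟩ := by rw [hprt, hfp]
    beta_reduce
    rw [h1]
    show Φfun fp t = _
    simp only [hΦfundef]
    congr 1
    apply intervalIntegral.integral_congr
    intro s _
    congr 1
    simp only [hdef, hGdef, sub_sub]
  · intro V hVcont hVeq
    set Vr : C(Set.Icc (0:ℝ) T, E) := ⟨(Set.Icc (0:ℝ) T).restrict V, hVcont.restrict⟩ with hVrdef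
    have hVfix : Function.IsFixedPt Φ Vr := by
      apply ContinuousMap.ext
      rintro ⟨t, ht⟩
      show Φfun Vr t = V t
      rw [hVeq t ht]
      simp only [hΦfundef]
      congr 1
      apply intervalIntegral.integral_congr
      intro s hs
      rw [Set.uIcc_of_le ht.1] at hs
      have hsIcc : s ∈ Set.Icc (0:ℝ) T := ⟨hs.1, hs.2.trans ht.2⟩
      have hpr : pr s = ⟨s, hsIcc⟩ := Set.projIcc_of_mem hT.le hsIcc
      congr 1
      simp only [hdef, hGdef, sub_sub, hpr]
      rfl
    have hVr : Vr = fp := hcontr.fixedPoint_unique (hVfix.iterate n)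
    intro t ht
    have hprt : pr t = ⟨t, ht⟩ := Set.projIcc_of_mem hT.le ht
    show fp (pr t) = V t
    rw [hprt, ← hVr]
    rfl
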